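/- Let d ≥ 3, ν = d − 5/2, and let b_j, b_k be nonzero complex numbers with j ≠ k and b_j ≠ b_k. Set P_{j,k}(z) = (b_j − b_k)z^d + (P_j(z) − P_k(z)) with deg(P_j − P_k) < d. There exists a constant C₁ > 0 and R > 0 such that: if z ∈ ℂ with |z| ≥ R satisfies |Re(P_{j,k}(z))| ≥ 2|P_{j,k}(z)|^{ν/d}, then every w ∈ D(z,1) satisfying |Re(P_{j,k}(w))| ≤ |P_{j,k}(w)|^{ν/d} obeys |z − w| ≥ C₁ |z|^{−3/2}. -/

import Mathlib

open Finset

private lemma abs_pow_sub_pow_le' (x y : ℂ) (B : ℝ) (hx : ‖x‖ ≤ B)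
    (hy : ‖y‖ ≤ B) (n : ℕ) :
    ‖x ^ n - y ^ n‖ ≤ n * B ^ (n - 1) * ‖x - y‖ := by
  have hB : 0 ≤ B := le_trans (norm_nonneg x) hx
  rw [← geom_sum₂_mul x y n, norm_mul]
  gcongr ?_ * _
  calc ‖∑ i ∈ range n, x ^ i * y ^ (n - 1 - i)‖
      ≤ ∑ i ∈ range n, ‖x ^ i * y ^ (n - 1 - i)‖ :=
        norm_sum_le _ _
    _ ≤ ∑ i ∈ range n, B ^ (n - 1) := by
        apply Finset.sum_le_sum
        intro i hi
        rw [norm_mul, norm_pow, norm_pow]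
        calc ‖x‖ ^ i * ‖y‖ ^ (n - 1 - i)
            ≤ B ^ i * B ^ (n - 1 - i) := by
              gcongr <;> exact norm_nonneg _
          _ = B ^ (i + (n - 1 - i)) := (pow_add B i _).symm
          _ = B ^ (n - 1) := by
              have hi' : i < n := Finset.mem_range.mp hi
              congr 1; omega
    _ = n * B ^ (n - 1) := by rw [Finset.sum_const, Finset.card_range, nsmul_eq_mul]

set_option maxHeartbeats 1000000 in
theorem stmt_9 (d : ℕ) (hd : 3 ≤ d) (bj bk : ℂ) (hbj : bj ≠ 0) (hbk : bk ≠ 0)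
    (hne : bj ≠ bk) (Q : Polynomial ℂ) (hQ : Q.degree < d)
    (Pjk : ℂ → ℂ) (hPjk : ∀ z, Pjk z = (bj - bk) * z ^ d + Q.eval z) :
    ∃ C₁ > (0:ℝ), ∃ R > (0:ℝ), ∀ z : ℂ, R ≤ ‖z‖ →
      2 * ‖Pjk z‖ ^ (((d : ℝ) - 5/2) / d) ≤ |(Pjk z).re| →
      ∀ w ∈ Metric.ball z 1,
        |(Pjk w).re| ≤ ‖Pjk w‖ ^ (((d : ℝ) - 5/2) / d) →
        C₁ * ‖z‖ ^ (-(3/2) : ℝ) ≤ ‖z - w‖ := by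
  set α : ℝ := ((d : ℝ) - 5/2) / d with hα
  have hd' : (3:ℝ) ≤ (d:ℝ) := by exact_mod_cast hd
  have hdpos : (0:ℝ) < d := by linarith
  have hα0 : 0 < α := by
    exact div_pos (by linarith) hdpos
  have hα1 : α ≤ 1 := by
    rw [hα, div_le_one hdpos]; linarith
  obtain ⟨a, ha, ha0⟩ : ∃ a : ℝ, a = ‖bj - bk‖ ∧ 0 < a :=
    ⟨_, rfl, by simpa using sub_ne_zero.mpr hne⟩
  obtain ⟨M, hM, hM0⟩ : ∃ M : ℝ, M = ∑ i ∈ range d, ‖Q.coeff i‖ ∧ 0 ≤ M :=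
    ⟨_, rfl, Finset.sum_nonneg fun i _ => norm_nonneg _⟩
  obtain ⟨L, hL, hL0⟩ : ∃ L : ℝ, L = (a + M) * d * 2 ^ (d - 1) ∧ 0 < L :=
    ⟨_, rfl, by positivity⟩
  have hn : Q.natDegree < d := by
    rcases eq_or_ne Q 0 with rfl | hQ0
    · simp only [Polynomial.natDegree_zero]; omega
    · exact (Polynomial.natDegree_lt_iff_degree_lt hQ0).mpr (by exact_mod_cast hQ)
  -- bound on Q.eval
  have hQbound : ∀ z : ℂ, 1 ≤ ‖z‖ →
      ‖Q.eval z‖ ≤ M * ‖z‖ ^ (d - 1) := by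
    intro z hz
    rw [Polynomial.eval_eq_sum_range' hn z]
    calc ‖∑ i ∈ range d, Q.coeff i * z ^ i‖
        ≤ ∑ i ∈ range d, ‖Q.coeff i * z ^ i‖ :=
          norm_sum_le _ _
      _ ≤ ∑ i ∈ range d, ‖Q.coeff i‖ * ‖z‖ ^ (d - 1) := by
          apply Finset.sum_le_sum
          intro i hi
          rw [norm_mul, norm_pow]
          have hi' := Finset.mem_range.mp hi
          exact mul_le_mul_of_nonneg_left
            (pow_le_pow_right₀ hz (by omega)) (norm_nonneg _)
      _ = M * ‖z‖ ^ (d - 1) := by rw [← Finset.sum_mul, ← hM]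
  -- lower bound |Pjk z| ≥ (a/2)|z|^d
  have hlow : ∀ z : ℂ, 1 ≤ ‖z‖ → 2 * M / a ≤ ‖z‖ →
      a / 2 * ‖z‖ ^ d ≤ ‖Pjk z‖ := by
    intro z hz1 hz2
    rw [hPjk z]
    have h1 : ‖(bj - bk) * z ^ d‖ = a * ‖z‖ ^ d := by
      rw [norm_mul, norm_pow, ha]
    have h3 : a * ‖z‖ ^ d - ‖Q.eval z‖ ≤
        ‖(bj - bk) * z ^ d + Q.eval z‖ := by
      have h4 := norm_sub_norm_le ((bj - bk) * z ^ d) ((bj - bk) * z ^ d + Q.eval z)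
      simp only [sub_add_cancel_left, norm_neg] at h4
      rw [h1] at h4
      linarith
    have h2 := hQbound z hz1
    have hzd : ‖z‖ ^ d = ‖z‖ ^ (d - 1) * ‖z‖ := by
      rw [← pow_succ]; congr 1; omega
    have hMz : M ≤ a / 2 * ‖z‖ := by
      rw [div_le_iff₀ ha0] at hz2; nlinarith
    have hp : (0:ℝ) ≤ ‖z‖ ^ (d - 1) := by positivity
    nlinarith
  -- Lipschitz-type bound
  have hdiff : ∀ z w : ℂ, 1 ≤ ‖z‖ → ‖z - w‖ ≤ 1 →
      ‖Pjk z - Pjk w‖ ≤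
        L * ‖z‖ ^ (d - 1) * ‖z - w‖ := by
    intro z w hz1 hzw
    have hwB : ‖w‖ ≤ 2 * ‖z‖ := by
      have h1 := norm_sub_norm_le w z
      rw [norm_sub_rev] at h1
      linarith
    have hzB : ‖z‖ ≤ 2 * ‖z‖ := by linarith
    have hB1 : (1:ℝ) ≤ 2 * ‖z‖ := by linarith
    have key : Pjk z - Pjk w = (bj - bk) * (z ^ d - w ^ d) +
        ∑ i ∈ range d, Q.coeff i * (z ^ i - w ^ i) := by
      simp only [hPjk, Polynomial.eval_eq_sum_range' hn, mul_sub,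
        Finset.sum_sub_distrib]
      ring
    have hterm : ∀ i : ℕ, i ≤ d → ‖z ^ i - w ^ i‖ ≤
        (d : ℝ) * (2 * ‖z‖) ^ (d - 1) * ‖z - w‖ := by
      intro i hi
      calc ‖z ^ i - w ^ i‖
          ≤ (i : ℝ) * (2 * ‖z‖) ^ (i - 1) * ‖z - w‖ :=
            abs_pow_sub_pow_le' z w _ hzB hwB i
        _ ≤ (d : ℝ) * (2 * ‖z‖) ^ (d - 1) * ‖z - w‖ := by
            gcongr <;> first
              | exact hB1
              | (exact_mod_cast hi)
              | omega
    calc ‖Pjk z - Pjk w‖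
        ≤ ‖(bj - bk) * (z ^ d - w ^ d)‖ +
          ‖∑ i ∈ range d, Q.coeff i * (z ^ i - w ^ i)‖ := by
          rw [key]; exact norm_add_le _ _
      _ ≤ a * ((d : ℝ) * (2 * ‖z‖) ^ (d - 1) * ‖z - w‖) +
          M * ((d : ℝ) * (2 * ‖z‖) ^ (d - 1) * ‖z - w‖) := by
          gcongr ?_ + ?_
          · rw [norm_mul, ← ha]
            exact mul_le_mul_of_nonneg_left (hterm d le_rfl) ha0.le
          · calc ‖∑ i ∈ range d, Q.coeff i * (z ^ i - w ^ i)‖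
                ≤ ∑ i ∈ range d, ‖Q.coeff i * (z ^ i - w ^ i)‖ :=
                  norm_sum_le _ _
              _ ≤ ∑ i ∈ range d, ‖Q.coeff i‖ *
                    ((d : ℝ) * (2 * ‖z‖) ^ (d - 1) * ‖z - w‖) := by
                  apply Finset.sum_le_sum
                  intro i hi
                  rw [norm_mul]
                  exact mul_le_mul_of_nonneg_left
                    (hterm i (le_of_lt (Finset.mem_range.mp hi))) (norm_nonneg _)
              _ = M * ((d : ℝ) * (2 * ‖z‖) ^ (d - 1) * ‖z - w‖) := by
                  rw [← Finset.sum_mul, ← hM]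
      _ = L * ‖z‖ ^ (d - 1) * ‖z - w‖ := by
          rw [hL, mul_pow]; ring
  -- Choose constants
  refine ⟨(a / 2) ^ α / (2 * L), by positivity,
    1 + 2 * M / a + 4 * L / a, by positivity, ?_⟩
  intro z hz hz2 w hw hw2
  have hMa : (0:ℝ) ≤ 2 * M / a := by positivity
  have hLa : (0:ℝ) ≤ 4 * L / a := by positivity
  have hz1 : 1 ≤ ‖z‖ := by linarith
  have hzpos : 0 < ‖z‖ := by linarith
  have hzM : 2 * M / a ≤ ‖z‖ := by linarith
  have hzL : 4 * L / a ≤ ‖z‖ := by linarith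
  have hzw1 : ‖z - w‖ ≤ 1 := by
    rw [Metric.mem_ball, dist_comm, Complex.dist_eq] at hw
    exact le_of_lt hw
  have hPz := hlow z hz1 hzM
  have hzdpos : (0:ℝ) < ‖z‖ ^ d := by positivity
  have hPzpos : 0 < ‖Pjk z‖ := by nlinarith
  have hDiff := hdiff z w hz1 hzw1
  have hX : (0:ℝ) < ‖z‖ ^ (d - 1) := by positivity
  -- |Pjk w| ≤ (3/2)|Pjk z|
  have hup : ‖Pjk w‖ ≤ 3 / 2 * ‖Pjk z‖ := by
    have h1 := norm_sub_norm_le (Pjk w) (Pjk z)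
    rw [norm_sub_rev] at h1
    have h2 : L * ‖z‖ ^ (d - 1) * ‖z - w‖ ≤
        L * ‖z‖ ^ (d - 1) := by
      nlinarith [mul_nonneg (mul_pos hL0 hX).le (sub_nonneg.mpr hzw1)]
    -- L |z|^{d-1} ≤ (a/4)|z|^d ≤ (1/2)|Pjk z|
    have hzd : ‖z‖ ^ d = ‖z‖ ^ (d - 1) * ‖z‖ := by
      rw [← pow_succ]; congr 1; omega
    have h3 : L ≤ a / 4 * ‖z‖ := by
      rw [div_le_iff₀ ha0] at hzL; nlinarith
    have h4 : L * ‖z‖ ^ (d - 1) ≤ a / 4 * ‖z‖ ^ d := by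
      rw [hzd]; nlinarith
    nlinarith
  -- rpow comparisons
  have habs0 : (0:ℝ) ≤ ‖Pjk w‖ := norm_nonneg _
  have h5 : ‖Pjk w‖ ^ α ≤ 3 / 2 * ‖Pjk z‖ ^ α := by
    calc ‖Pjk w‖ ^ α
        ≤ (3 / 2 * ‖Pjk z‖) ^ α :=
          Real.rpow_le_rpow habs0 hup hα0.le
      _ = (3 / 2 : ℝ) ^ α * ‖Pjk z‖ ^ α :=
          Real.mul_rpow (by norm_num) (norm_nonneg _)
      _ ≤ (3 / 2 : ℝ) ^ (1:ℝ) * ‖Pjk z‖ ^ α :=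
          mul_le_mul_of_nonneg_right
            (Real.rpow_le_rpow_of_exponent_le (by norm_num) hα1)
            (Real.rpow_nonneg (norm_nonneg _) α)
      _ = 3 / 2 * ‖Pjk z‖ ^ α := by rw [Real.rpow_one]
  -- real part estimate
  have hre : |(Pjk z).re| - |(Pjk w).re| ≤ ‖Pjk z - Pjk w‖ := by
    have h6 : |(Pjk z).re| - |(Pjk w).re| ≤ |(Pjk z).re - (Pjk w).re| :=
      abs_sub_abs_le_abs_sub _ _
    have h7 : |(Pjk z - Pjk w).re| ≤ ‖Pjk z - Pjk w‖ :=
      Complex.abs_re_le_norm _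
    rw [Complex.sub_re] at h7
    linarith
  have hkey : 1 / 2 * ‖Pjk z‖ ^ α ≤ ‖Pjk z - Pjk w‖ := by
    linarith
  -- lower bound for |Pjk z|^α
  have h8 : (a / 2) ^ α * (‖z‖ ^ (d - 1) * ‖z‖ ^ (-(3/2) : ℝ))
      ≤ ‖Pjk z‖ ^ α := by
    have e1 : ‖Pjk z‖ ^ α ≥ (a / 2 * ‖z‖ ^ d) ^ α :=
      Real.rpow_le_rpow (by positivity) hPz hα0.le
    have e2 : (a / 2 * ‖z‖ ^ d) ^ α =
        (a / 2) ^ α * (‖z‖ ^ d) ^ α :=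
      Real.mul_rpow (by positivity) (by positivity)
    have e3 : ((‖z‖ ^ d : ℝ)) ^ α = ‖z‖ ^ ((d : ℝ) * α) := by
      rw [← Real.rpow_natCast (‖z‖) d, ← Real.rpow_mul hzpos.le]
    have e4 : (d : ℝ) * α = ((d : ℝ) - 1) + (-(3/2) : ℝ) := by
      rw [hα]; field_simp; ring
    have e5 : ‖z‖ ^ ((d : ℝ) * α) =
        ‖z‖ ^ ((d : ℝ) - 1) * ‖z‖ ^ (-(3/2) : ℝ) := by
      rw [e4, Real.rpow_add hzpos]
    have e6 : ‖z‖ ^ ((d : ℝ) - 1) = ‖z‖ ^ (d - 1) := by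
      rw [← Real.rpow_natCast (‖z‖) (d - 1)]
      congr 1
      push_cast [Nat.cast_sub (by omega : 1 ≤ d)]
      ring
    rw [e2, e3, e5, e6] at e1
    exact e1
  -- combine
  have hfinal : 1 / 2 * ((a / 2) ^ α *
      (‖z‖ ^ (d - 1) * ‖z‖ ^ (-(3/2) : ℝ))) ≤
      L * ‖z‖ ^ (d - 1) * ‖z - w‖ := by
    have : 1 / 2 * ((a / 2) ^ α *
        (‖z‖ ^ (d - 1) * ‖z‖ ^ (-(3/2) : ℝ))) ≤
        1 / 2 * ‖Pjk z‖ ^ α := by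
      have hpa : (0:ℝ) ≤ (a / 2) ^ α := by positivity
      nlinarith
    linarith
  rw [div_mul_eq_mul_div, div_le_iff₀ (by positivity : (0:ℝ) < 2 * L)]
  have h9 : ‖z‖ ^ (d - 1) *
      ((a / 2) ^ α * ‖z‖ ^ (-(3/2) : ℝ)) ≤
      ‖z‖ ^ (d - 1) * (‖z - w‖ * (2 * L)) := by
    nlinarith
  exact le_of_mul_le_mul_left h9 hX
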